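/- Let τ₀ : ℝ² → (0,∞) and Q₀ : ℝ² → ℂ_I be smooth, and let v : ℝ² → W be a smooth map with H(v,v) nowhere vanishing, satisfying the v-system: ∂_z v = (∂_z(log √τ₀))·v + (i·Q₀/√τ₀)·J·v and ∂_z̄ v = (i·√τ₀/4)·J·v. Then ∂_z̄ Q₀ = 0 (Q₀ is I-holomorphic) and ∂_z(∂_z̄(log √τ₀)) = −|Q₀|²/τ₀ + τ₀/16. (These are the compatibility conditions of the spinor equation of H = 1/2 surfaces in ℝ^{1,2}.) -/

import Mathlib

/-!
`ℍ^ℂ` is modelled as `Quaternion ℂ` (complex coefficients on `1, I, J, K`, central complex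
unit `i = Complex.I`, `I² = J² = K² = −1`, `I*J = K = −J*I`).  Maps on `ℝ²` are taken on
`ℝ × ℝ`; smoothness and the partial derivatives `∂ₓ`, `∂_y` are meant coefficientwise, and
`qdz f = (1/2)(∂ₓ f − I·∂_y f)`, `qdzbar f = (1/2)(∂ₓ f + I·∂_y f)` (left multiplication
by the quaternion `I`).  `cI` embeds `ℂ` as `ℂ_I = ℝ·1 ⊕ ℝ·I ⊂ ℍ^ℂ`.
-/

noncomputable section

/-- The quaternion `I`. -/
def Iq : Quaternion ℂ := ⟨0, 1, 0, 0⟩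

/-- The quaternion `J`. -/
def Jq : Quaternion ℂ := ⟨0, 0, 1, 0⟩

/-- Coefficientwise complex conjugation `â` on the complex quaternions. -/
def qhat (a : Quaternion ℂ) : Quaternion ℂ :=
  ⟨starRingEnd ℂ a.re, starRingEnd ℂ a.imI, starRingEnd ℂ a.imJ, starRingEnd ℂ a.imK⟩

/-- The embedding of `ℂ` onto `ℂ_I = ℝ·1 ⊕ ℝ·I ⊂ ℍ^ℂ`, sending the complex unit to `I`. -/
def cI (w : ℂ) : Quaternion ℂ := ⟨((w.re : ℝ) : ℂ), ((w.im : ℝ) : ℂ), 0, 0⟩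

/-- The coefficientwise directional derivative of an `ℍ^ℂ`-valued map on `ℝ²`. -/
def qpd (v : ℝ × ℝ) (f : ℝ × ℝ → Quaternion ℂ) (p : ℝ × ℝ) : Quaternion ℂ :=
  ⟨fderiv ℝ (fun s => (f s).re) p v, fderiv ℝ (fun s => (f s).imI) p v,
   fderiv ℝ (fun s => (f s).imJ) p v, fderiv ℝ (fun s => (f s).imK) p v⟩

/-- `∂_z f := (1/2)(∂ₓ f − I·∂_y f)`, with `I·` the left multiplication by `I` in `ℍ^ℂ`. -/
def qdz (f : ℝ × ℝ → Quaternion ℂ) (p : ℝ × ℝ) : Quaternion ℂ :=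
  (2 : ℂ)⁻¹ • (qpd (1, 0) f p - Iq * qpd (0, 1) f p)

/-- `∂_z̄ f := (1/2)(∂ₓ f + I·∂_y f)`. -/
def qdzbar (f : ℝ × ℝ → Quaternion ℂ) (p : ℝ × ℝ) : Quaternion ℂ :=
  (2 : ℂ)⁻¹ • (qpd (1, 0) f p + Iq * qpd (0, 1) f p)

/-- Smoothness (coefficientwise) of an `ℍ^ℂ`-valued map on `ℝ²`. -/
def QSmooth (f : ℝ × ℝ → Quaternion ℂ) : Prop :=
  ContDiff ℝ (⊤ : ℕ∞) (fun p => (f p).re) ∧ ContDiff ℝ (⊤ : ℕ∞) (fun p => (f p).imI) ∧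
  ContDiff ℝ (⊤ : ℕ∞) (fun p => (f p).imJ) ∧ ContDiff ℝ (⊤ : ℕ∞) (fun p => (f p).imK)

/-- The real-valued function `r`, regarded as `ℂ_I`-valued (i.e. `ℍ^ℂ`-valued). -/
def rQ (r : ℝ) : Quaternion ℂ := ⟨((r : ℝ) : ℂ), 0, 0, 0⟩

/-- `L := {(1/2)(1+iI)(a+bJ) : a, b ∈ ℂ} ⊂ ℍ^ℂ`. -/
def Lset : Set (Quaternion ℂ) :=
  {g | ∃ a b : ℂ, g = (2 : ℂ)⁻¹ •
    ((⟨1, Complex.I, 0, 0⟩ : Quaternion ℂ) * (⟨a, 0, b, 0⟩ : Quaternion ℂ))}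

/-- For `g = (1/2)(1+iI)(a+bJ) ∈ L` (so that `a = 2·g.re`, `b = 2·g.imJ`), the squared norm
`|g|² := |a|² − |b|²`. -/
def LnormSq (g : Quaternion ℂ) : ℝ :=
  Complex.normSq (2 * g.re) - Complex.normSq (2 * g.imJ)

/-- The `g`-system: `∂_z g = (∂_z log √τ₀)·g + (Q₀/√τ₀)·J·ĝ·I` and
`∂_z̄ g = (√τ₀/4)·J·ĝ·I`, with the `ℂ_I`-valued Weierstrass data `(Q₀, τ₀)`. -/
def GSystem (τ₀ : ℝ × ℝ → ℝ) (Q₀ : ℝ × ℝ → ℂ) (g : ℝ × ℝ → Quaternion ℂ) : Prop :=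
  ∀ p : ℝ × ℝ,
    qdz g p = qdz (fun s => rQ (Real.log (Real.sqrt (τ₀ s)))) p * g p
        + (Real.sqrt (τ₀ p))⁻¹ • (cI (Q₀ p) * (Jq * qhat (g p) * Iq)) ∧
    qdzbar g p = (Real.sqrt (τ₀ p) / 4) • (Jq * qhat (g p) * Iq)

/-- `W := {α₀·1 + α₁I + iα₂J + iα₃K : α₀,…,α₃ ∈ ℝ} ⊂ ℍ^ℂ`. -/
def Wset : Set (Quaternion ℂ) :=
  {v | ∃ α₀ α₁ α₂ α₃ : ℝ,
    v = ⟨((α₀ : ℝ) : ℂ), ((α₁ : ℝ) : ℂ), Complex.I * (α₂ : ℂ), Complex.I * (α₃ : ℂ)⟩}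

/-- The complex bilinear norm `H(v,v) = v₀² + v₁² + v₂² + v₃²` of a complex quaternion;
for `v = α₀ + α₁I + iα₂J + iα₃K ∈ W` it equals the real number `α₀² + α₁² − α₂² − α₃²`. -/
def Hvv (v : Quaternion ℂ) : ℂ := v.re ^ 2 + v.imI ^ 2 + v.imJ ^ 2 + v.imK ^ 2

/-- The `v`-system: `∂_z v = (∂_z log √τ₀)·v + (i·Q₀/√τ₀)·J·v` and
`∂_z̄ v = (i·√τ₀/4)·J·v` (the spinor equation of `H = 1/2` surfaces in `ℝ^{1,2}`). -/
def VSystem (τ₀ : ℝ × ℝ → ℝ) (Q₀ : ℝ × ℝ → ℂ) (v : ℝ × ℝ → Quaternion ℂ) : Prop :=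
  ∀ p : ℝ × ℝ,
    qdz v p = qdz (fun s => rQ (Real.log (Real.sqrt (τ₀ s)))) p * v p
        + (Real.sqrt (τ₀ p))⁻¹ • (Complex.I • (cI (Q₀ p) * (Jq * v p))) ∧
    qdzbar v p = (Real.sqrt (τ₀ p) / 4) • (Complex.I • (Jq * v p))

namespace S13

abbrev HC := Quaternion ℂ

/-- directional derivative of a scalar function -/
def pd (d : ℝ × ℝ) (f : ℝ × ℝ → ℂ) (p : ℝ × ℝ) : ℂ := fderiv ℝ f p d

lemma pd_add {f g : ℝ × ℝ → ℂ} {p : ℝ × ℝ} (d : ℝ × ℝ)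
    (hf : DifferentiableAt ℝ f p) (hg : DifferentiableAt ℝ g p) :
    pd d (fun s => f s + g s) p = pd d f p + pd d g p := by
  unfold pd; rw [fderiv_fun_add hf hg]; simp

lemma pd_sub {f g : ℝ × ℝ → ℂ} {p : ℝ × ℝ} (d : ℝ × ℝ)
    (hf : DifferentiableAt ℝ f p) (hg : DifferentiableAt ℝ g p) :
    pd d (fun s => f s - g s) p = pd d f p - pd d g p := by
  unfold pd; rw [fderiv_fun_sub hf hg]; simp

lemma pd_mul {f g : ℝ × ℝ → ℂ} {p : ℝ × ℝ} (d : ℝ × ℝ)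
    (hf : DifferentiableAt ℝ f p) (hg : DifferentiableAt ℝ g p) :
    pd d (fun s => f s * g s) p = pd d f p * g p + f p * pd d g p := by
  unfold pd; rw [fderiv_fun_mul hf hg]; simp; ring

lemma pd_const (d : ℝ × ℝ) (c : ℂ) (p : ℝ × ℝ) : pd d (fun _ => c) p = 0 := by
  unfold pd; simp

lemma pd_zero (d : ℝ × ℝ) (p : ℝ × ℝ) : pd d (fun _ => (0:ℂ)) p = 0 := pd_const d 0 p

lemma pd_ofReal {g : ℝ × ℝ → ℝ} {p : ℝ × ℝ} (d : ℝ × ℝ) (hg : DifferentiableAt ℝ g p) :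
    pd d (fun s => ((g s : ℝ) : ℂ)) p = ((fderiv ℝ g p d : ℝ) : ℂ) := by
  unfold pd
  have h : fderiv ℝ (fun s => ((g s : ℝ) : ℂ)) p
      = Complex.ofRealCLM.comp (fderiv ℝ g p) :=
    (Complex.ofRealCLM.hasFDerivAt.comp p hg.hasFDerivAt).fderiv
  rw [h]; simp

lemma pd_comm {f : ℝ × ℝ → ℂ} (hf : ContDiff ℝ (⊤ : ℕ∞) f) (d e : ℝ × ℝ) (p : ℝ × ℝ) :
    pd d (fun s => pd e f s) p = pd e (fun s => pd d f s) p := by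
  have hd : ∀ y, HasFDerivAt f (fderiv ℝ f y) y :=
    fun y => (hf.differentiable (by simp) y).hasFDerivAt
  have h2 : ContDiff ℝ (⊤ : ℕ∞) (fderiv ℝ f) := hf.fderiv_right (by exact_mod_cast le_top)
  have h2p : DifferentiableAt ℝ (fderiv ℝ f) p := (h2.differentiable (by simp)) p
  unfold pd
  rw [fderiv_clm_apply h2p (differentiableAt_const e),
      fderiv_clm_apply h2p (differentiableAt_const d)]
  simp [second_derivative_symmetric hd (h2p.hasFDerivAt) e d]

end S13

namespace S13

def QDiffAt (f : ℝ × ℝ → HC) (p : ℝ × ℝ) : Prop :=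
  DifferentiableAt ℝ (fun s => (f s).re) p ∧ DifferentiableAt ℝ (fun s => (f s).imI) p ∧
  DifferentiableAt ℝ (fun s => (f s).imJ) p ∧ DifferentiableAt ℝ (fun s => (f s).imK) p

lemma qsm_diffAt {f : ℝ × ℝ → HC} (hf : QSmooth f) (p : ℝ × ℝ) : QDiffAt f p :=
  ⟨(hf.1.differentiable (by simp)).differentiableAt,
   (hf.2.1.differentiable (by simp)).differentiableAt,
   (hf.2.2.1.differentiable (by simp)).differentiableAt,
   (hf.2.2.2.differentiable (by simp)).differentiableAt⟩

@[simp] lemma qpd_re (d : ℝ × ℝ) (f : ℝ × ℝ → HC) (p : ℝ × ℝ) :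
    (qpd d f p).re = pd d (fun s => (f s).re) p := rfl
@[simp] lemma qpd_imI (d : ℝ × ℝ) (f : ℝ × ℝ → HC) (p : ℝ × ℝ) :
    (qpd d f p).imI = pd d (fun s => (f s).imI) p := rfl
@[simp] lemma qpd_imJ (d : ℝ × ℝ) (f : ℝ × ℝ → HC) (p : ℝ × ℝ) :
    (qpd d f p).imJ = pd d (fun s => (f s).imJ) p := rfl
@[simp] lemma qpd_imK (d : ℝ × ℝ) (f : ℝ × ℝ → HC) (p : ℝ × ℝ) :
    (qpd d f p).imK = pd d (fun s => (f s).imK) p := rfl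

@[simp] lemma csmul_re (c : ℂ) (x : HC) : (c • x).re = c * x.re := rfl
@[simp] lemma csmul_imI (c : ℂ) (x : HC) : (c • x).imI = c * x.imI := rfl
@[simp] lemma csmul_imJ (c : ℂ) (x : HC) : (c • x).imJ = c * x.imJ := rfl
@[simp] lemma csmul_imK (c : ℂ) (x : HC) : (c • x).imK = c * x.imK := rfl

lemma qpd_add {f g : ℝ × ℝ → HC} {p : ℝ × ℝ} (d : ℝ × ℝ)
    (hf : QDiffAt f p) (hg : QDiffAt g p) :
    qpd d (fun s => f s + g s) p = qpd d f p + qpd d g p := by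
  obtain ⟨hf1, hf2, hf3, hf4⟩ := hf
  obtain ⟨hg1, hg2, hg3, hg4⟩ := hg
  ext <;> simp only [Quaternion.re_add, Quaternion.imI_add,
    Quaternion.imJ_add, Quaternion.imK_add, qpd_re, qpd_imI, qpd_imJ, qpd_imK]
  · exact pd_add d hf1 hg1
  · exact pd_add d hf2 hg2
  · exact pd_add d hf3 hg3
  · exact pd_add d hf4 hg4

lemma qpd_const (d : ℝ × ℝ) (c : HC) (p : ℝ × ℝ) : qpd d (fun _ => c) p = 0 := by
  ext <;> simp [pd_const] <;> rfl

lemma qpd_mul {f g : ℝ × ℝ → HC} {p : ℝ × ℝ} (d : ℝ × ℝ)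
    (hf : QDiffAt f p) (hg : QDiffAt g p) :
    qpd d (fun s => f s * g s) p = qpd d f p * g p + f p * qpd d g p := by
  obtain ⟨hf1, hf2, hf3, hf4⟩ := hf
  obtain ⟨hg1, hg2, hg3, hg4⟩ := hg
  ext
  · show pd d (fun s => (f s * g s).re) p = _
    simp only [Quaternion.re_mul]
    rw [pd_sub d (by fun_prop) (by fun_prop), pd_sub d (by fun_prop) (by fun_prop),
        pd_sub d (by fun_prop) (by fun_prop), pd_mul d hf1 hg1, pd_mul d hf2 hg2,
        pd_mul d hf3 hg3, pd_mul d hf4 hg4]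
    simp only [Quaternion.re_add, Quaternion.re_mul, qpd_re, qpd_imI, qpd_imJ, qpd_imK]
    ring
  · show pd d (fun s => (f s * g s).imI) p = _
    simp only [Quaternion.imI_mul]
    rw [pd_sub d (by fun_prop) (by fun_prop), pd_add d (by fun_prop) (by fun_prop),
        pd_add d (by fun_prop) (by fun_prop), pd_mul d hf1 hg2, pd_mul d hf2 hg1,
        pd_mul d hf3 hg4, pd_mul d hf4 hg3]
    simp only [Quaternion.imI_add, Quaternion.imI_mul, qpd_re, qpd_imI, qpd_imJ, qpd_imK]
    ring
  · show pd d (fun s => (f s * g s).imJ) p = _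
    simp only [Quaternion.imJ_mul]
    rw [pd_add d (by fun_prop) (by fun_prop), pd_add d (by fun_prop) (by fun_prop),
        pd_sub d (by fun_prop) (by fun_prop), pd_mul d hf1 hg3, pd_mul d hf2 hg4,
        pd_mul d hf3 hg1, pd_mul d hf4 hg2]
    simp only [Quaternion.imJ_add, Quaternion.imJ_mul, qpd_re, qpd_imI, qpd_imJ, qpd_imK]
    ring
  · show pd d (fun s => (f s * g s).imK) p = _
    simp only [Quaternion.imK_mul]
    rw [pd_add d (by fun_prop) (by fun_prop), pd_sub d (by fun_prop) (by fun_prop),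
        pd_add d (by fun_prop) (by fun_prop), pd_mul d hf1 hg4, pd_mul d hf2 hg3,
        pd_mul d hf3 hg2, pd_mul d hf4 hg1]
    simp only [Quaternion.imK_add, Quaternion.imK_mul, qpd_re, qpd_imI, qpd_imJ, qpd_imK]
    ring

lemma qpd_smul {f : ℝ × ℝ → HC} {p : ℝ × ℝ} (d : ℝ × ℝ) (c : ℂ) (hf : QDiffAt f p) :
    qpd d (fun s => c • f s) p = c • qpd d f p := by
  obtain ⟨hf1, hf2, hf3, hf4⟩ := hf
  ext <;> simp only [csmul_re, csmul_imI, csmul_imJ, csmul_imK,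
    qpd_re, qpd_imI, qpd_imJ, qpd_imK]
  · rw [show (fun s => c * (f s).re) = fun s => (fun _ => c) s * (fun s => (f s).re) s from rfl,
      pd_mul d (by fun_prop) hf1, pd_const]; ring
  · rw [show (fun s => c * (f s).imI) = fun s => (fun _ => c) s * (fun s => (f s).imI) s from rfl,
      pd_mul d (by fun_prop) hf2, pd_const]; ring
  · rw [show (fun s => c * (f s).imJ) = fun s => (fun _ => c) s * (fun s => (f s).imJ) s from rfl,
      pd_mul d (by fun_prop) hf3, pd_const]; ring
  · rw [show (fun s => c * (f s).imK) = fun s => (fun _ => c) s * (fun s => (f s).imK) s from rfl,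
      pd_mul d (by fun_prop) hf4, pd_const]; ring

end S13

namespace S13

def IsCI (x : HC) : Prop := x.imJ = 0 ∧ x.imK = 0

def conjI (x : HC) : HC := ⟨x.re, -x.imI, x.imJ, x.imK⟩

lemma Iq_re : Iq.re = 0 := rfl
lemma Iq_imI : Iq.imI = 1 := rfl
lemma Iq_imJ : Iq.imJ = 0 := rfl
lemma Iq_imK : Iq.imK = 0 := rfl
lemma Jq_re : Jq.re = 0 := rfl
lemma Jq_imI : Jq.imI = 0 := rfl
lemma Jq_imJ : Jq.imJ = 1 := rfl
lemma Jq_imK : Jq.imK = 0 := rfl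
lemma conjI_re (x : HC) : (conjI x).re = x.re := rfl
lemma conjI_imI (x : HC) : (conjI x).imI = -x.imI := rfl
lemma conjI_imJ (x : HC) : (conjI x).imJ = x.imJ := rfl
lemma conjI_imK (x : HC) : (conjI x).imK = x.imK := rfl
lemma cI_re (w : ℂ) : (cI w).re = ((w.re : ℝ) : ℂ) := rfl
lemma cI_imI (w : ℂ) : (cI w).imI = ((w.im : ℝ) : ℂ) := rfl
lemma cI_imJ (w : ℂ) : (cI w).imJ = 0 := rfl
lemma cI_imK (w : ℂ) : (cI w).imK = 0 := rfl
lemma rQ_re (r : ℝ) : (rQ r).re = ((r : ℝ) : ℂ) := rfl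
lemma rQ_imI (r : ℝ) : (rQ r).imI = 0 := rfl
lemma rQ_imJ (r : ℝ) : (rQ r).imJ = 0 := rfl
lemma rQ_imK (r : ℝ) : (rQ r).imK = 0 := rfl

local notation "simpmul" => 0

lemma IsCI.mulCI {x y : HC} (hx : IsCI x) (hy : IsCI y) : IsCI (x * y) := by
  constructor <;>
    simp [Quaternion.imJ_mul, Quaternion.imK_mul, hx.1, hx.2, hy.1, hy.2]

lemma IsCI.comm {x y : HC} (hx : IsCI x) (hy : IsCI y) : x * y = y * x := by
  ext <;> simp [Quaternion.re_mul, Quaternion.imI_mul, Quaternion.imJ_mul,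
    Quaternion.imK_mul, hx.1, hx.2, hy.1, hy.2] <;> ring

lemma Iq_comm {x : HC} (hx : IsCI x) (z : HC) : Iq * (x * z) = x * (Iq * z) := by
  ext <;> simp [Iq_re, Iq_imI, Iq_imJ, Iq_imK, Quaternion.re_mul, Quaternion.imI_mul, Quaternion.imJ_mul,
    Quaternion.imK_mul, hx.1, hx.2] <;> ring

lemma II (z : HC) : Iq * (Iq * z) = -z := by
  ext <;> simp [Iq_re, Iq_imI, Iq_imJ, Iq_imK, Quaternion.re_mul, Quaternion.imI_mul, Quaternion.imJ_mul,
    Quaternion.imK_mul]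

lemma IJ_anti (z : HC) : Iq * (Jq * z) = -(Jq * (Iq * z)) := by
  ext <;> simp [Iq_re, Iq_imI, Iq_imJ, Iq_imK, Jq_re, Jq_imI, Jq_imJ, Jq_imK, Quaternion.re_mul, Quaternion.imI_mul, Quaternion.imJ_mul,
    Quaternion.imK_mul] <;> ring

lemma J_ci {x : HC} (hx : IsCI x) (z : HC) : Jq * (x * z) = conjI x * (Jq * z) := by
  ext <;> simp [Jq_re, Jq_imI, Jq_imJ, Jq_imK, conjI_re, conjI_imI, conjI_imJ, conjI_imK, Quaternion.re_mul, Quaternion.imI_mul, Quaternion.imJ_mul,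
    Quaternion.imK_mul, hx.1, hx.2] <;> ring

lemma JJ (z : HC) : Jq * (Jq * z) = -z := by
  ext <;> simp [Jq_re, Jq_imI, Jq_imJ, Jq_imK, Quaternion.re_mul, Quaternion.imI_mul, Quaternion.imJ_mul,
    Quaternion.imK_mul]

/-- the killing lemma -/
lemma eq_zero_of_mul_right {w x : HC} (h : w * x = 0) (hx : Hvv x ≠ 0) : w = 0 := by
  have h2 : w * (x * star x) = 0 := by rw [← mul_assoc, h, zero_mul]
  rw [Quaternion.self_mul_star, Quaternion.mul_coe_eq_smul] at h2
  have hns : Quaternion.normSq x ≠ 0 := by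
    rw [Quaternion.normSq_def']; exact hx
  rw [← one_smul ℂ w, ← inv_mul_cancel₀ hns, mul_smul, h2, smul_zero]

lemma QDiffAt.constF (c : HC) (p : ℝ × ℝ) : QDiffAt (fun _ => c) p :=
  ⟨differentiableAt_const _, differentiableAt_const _, differentiableAt_const _,
   differentiableAt_const _⟩

lemma QDiffAt.add {f g : ℝ × ℝ → HC} {p : ℝ × ℝ} (hf : QDiffAt f p) (hg : QDiffAt g p) :
    QDiffAt (fun s => f s + g s) p := by
  obtain ⟨hf1, hf2, hf3, hf4⟩ := hf; obtain ⟨hg1, hg2, hg3, hg4⟩ := hg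
  exact ⟨hf1.add hg1, hf2.add hg2, hf3.add hg3, hf4.add hg4⟩

lemma QDiffAt.sub {f g : ℝ × ℝ → HC} {p : ℝ × ℝ} (hf : QDiffAt f p) (hg : QDiffAt g p) :
    QDiffAt (fun s => f s - g s) p := by
  obtain ⟨hf1, hf2, hf3, hf4⟩ := hf; obtain ⟨hg1, hg2, hg3, hg4⟩ := hg
  exact ⟨hf1.sub hg1, hf2.sub hg2, hf3.sub hg3, hf4.sub hg4⟩

lemma QDiffAt.mulF {f g : ℝ × ℝ → HC} {p : ℝ × ℝ} (hf : QDiffAt f p) (hg : QDiffAt g p) :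
    QDiffAt (fun s => f s * g s) p := by
  obtain ⟨hf1, hf2, hf3, hf4⟩ := hf; obtain ⟨hg1, hg2, hg3, hg4⟩ := hg
  refine ⟨?_, ?_, ?_, ?_⟩
  · simp only [Quaternion.re_mul]; fun_prop
  · simp only [Quaternion.imI_mul]; fun_prop
  · simp only [Quaternion.imJ_mul]; fun_prop
  · simp only [Quaternion.imK_mul]; fun_prop

lemma QDiffAt.smulF {f : ℝ × ℝ → HC} {p : ℝ × ℝ} (c : ℂ) (hf : QDiffAt f p) :
    QDiffAt (fun s => c • f s) p := by
  obtain ⟨hf1, hf2, hf3, hf4⟩ := hf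
  refine ⟨?_, ?_, ?_, ?_⟩
  · simp only [csmul_re]; fun_prop
  · simp only [csmul_imI]; fun_prop
  · simp only [csmul_imJ]; fun_prop
  · simp only [csmul_imK]; fun_prop

lemma qpd_sub {f g : ℝ × ℝ → HC} {p : ℝ × ℝ} (d : ℝ × ℝ)
    (hf : QDiffAt f p) (hg : QDiffAt g p) :
    qpd d (fun s => f s - g s) p = qpd d f p - qpd d g p := by
  obtain ⟨hf1, hf2, hf3, hf4⟩ := hf; obtain ⟨hg1, hg2, hg3, hg4⟩ := hg
  ext <;> simp only [Quaternion.re_sub, Quaternion.imI_sub, Quaternion.imJ_sub,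
    Quaternion.imK_sub, qpd_re, qpd_imI, qpd_imJ, qpd_imK]
  · exact pd_sub d hf1 hg1
  · exact pd_sub d hf2 hg2
  · exact pd_sub d hf3 hg3
  · exact pd_sub d hf4 hg4

lemma qpd_const_mul {g : ℝ × ℝ → HC} {p : ℝ × ℝ} (d : ℝ × ℝ) (c : HC) (hg : QDiffAt g p) :
    qpd d (fun s => c * g s) p = c * qpd d g p := by
  have h := qpd_mul (f := fun _ => c) d (QDiffAt.constF c p) hg
  simpa [qpd_const] using h

lemma pd_smooth {f : ℝ × ℝ → ℂ} (hf : ContDiff ℝ (⊤ : ℕ∞) f) (d : ℝ × ℝ) :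
    ContDiff ℝ (⊤ : ℕ∞) (fun p => pd d f p) :=
  (hf.fderiv_right (by exact_mod_cast le_top)).clm_apply contDiff_const

lemma qsm_qpd {f : ℝ × ℝ → HC} (hf : QSmooth f) (d : ℝ × ℝ) : QSmooth (qpd d f) :=
  ⟨pd_smooth hf.1 d, pd_smooth hf.2.1 d, pd_smooth hf.2.2.1 d, pd_smooth hf.2.2.2 d⟩

lemma qpd_comm {f : ℝ × ℝ → HC} (hf : QSmooth f) (d e : ℝ × ℝ) (p : ℝ × ℝ) :
    qpd d (qpd e f) p = qpd e (qpd d f) p := by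
  ext
  · exact pd_comm hf.1 d e p
  · exact pd_comm hf.2.1 d e p
  · exact pd_comm hf.2.2.1 d e p
  · exact pd_comm hf.2.2.2 d e p

lemma mul_csmul (c : ℂ) (x z : HC) : x * (c • z) = c • (x * z) := by
  ext <;> simp [Quaternion.re_mul, Quaternion.imI_mul, Quaternion.imJ_mul,
    Quaternion.imK_mul] <;> ring

lemma qdz_eq (f : ℝ × ℝ → HC) (p : ℝ × ℝ) :
    qdz f p = (2 : ℂ)⁻¹ • (qpd (1, 0) f p - Iq * qpd (0, 1) f p) := rfl

lemma qdzbar_eq (f : ℝ × ℝ → HC) (p : ℝ × ℝ) :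
    qdzbar f p = (2 : ℂ)⁻¹ • (qpd (1, 0) f p + Iq * qpd (0, 1) f p) := rfl

lemma qpd_qdz {f : ℝ × ℝ → HC} (hf : QSmooth f) (d : ℝ × ℝ) (p : ℝ × ℝ) :
    qpd d (qdz f) p
      = (2 : ℂ)⁻¹ • (qpd d (qpd (1, 0) f) p - Iq * qpd d (qpd (0, 1) f) p) := by
  have h1 : QDiffAt (qpd (1, 0) f) p := qsm_diffAt (qsm_qpd hf (1, 0)) p
  have h2 : QDiffAt (qpd (0, 1) f) p := qsm_diffAt (qsm_qpd hf (0, 1)) p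
  have h2' : QDiffAt (fun s => Iq * qpd (0, 1) f s) p := QDiffAt.mulF (QDiffAt.constF Iq p) h2
  have e : qdz f = fun s => (2 : ℂ)⁻¹ • (qpd (1, 0) f s - Iq * qpd (0, 1) f s) := rfl
  rw [e, qpd_smul d _ (QDiffAt.sub h1 h2'), qpd_sub d h1 h2', qpd_const_mul d Iq h2]

lemma qpd_qdzbar {f : ℝ × ℝ → HC} (hf : QSmooth f) (d : ℝ × ℝ) (p : ℝ × ℝ) :
    qpd d (qdzbar f) p
      = (2 : ℂ)⁻¹ • (qpd d (qpd (1, 0) f) p + Iq * qpd d (qpd (0, 1) f) p) := by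
  have h1 : QDiffAt (qpd (1, 0) f) p := qsm_diffAt (qsm_qpd hf (1, 0)) p
  have h2 : QDiffAt (qpd (0, 1) f) p := qsm_diffAt (qsm_qpd hf (0, 1)) p
  have h2' : QDiffAt (fun s => Iq * qpd (0, 1) f s) p := QDiffAt.mulF (QDiffAt.constF Iq p) h2
  have e : qdzbar f = fun s => (2 : ℂ)⁻¹ • (qpd (1, 0) f s + Iq * qpd (0, 1) f s) := rfl
  rw [e, qpd_smul d _ (QDiffAt.add h1 h2'), qpd_add d h1 h2', qpd_const_mul d Iq h2]

/-- Schwarz: `∂_z̄ ∂_z = ∂_z ∂_z̄`. -/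
lemma qdzbar_qdz_comm {f : ℝ × ℝ → HC} (hf : QSmooth f) (p : ℝ × ℝ) :
    qdzbar (qdz f) p = qdz (qdzbar f) p := by
  rw [qdzbar_eq, qdz_eq, qpd_qdz hf, qpd_qdz hf, qpd_qdzbar hf, qpd_qdzbar hf,
    qpd_comm hf (0, 1) (1, 0)]
  rw [mul_csmul, mul_csmul, smul_sub, smul_add, mul_sub, mul_add, II]
  module

end S13

namespace S13

lemma csmul_mul (c : ℂ) (x z : HC) : (c • x) * z = c • (x * z) := by
  ext <;> simp [Quaternion.re_mul, Quaternion.imI_mul, Quaternion.imJ_mul,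
    Quaternion.imK_mul] <;> ring

lemma qdz_add {f g : ℝ × ℝ → HC} {p : ℝ × ℝ} (hf : QDiffAt f p) (hg : QDiffAt g p) :
    qdz (fun s => f s + g s) p = qdz f p + qdz g p := by
  rw [qdz_eq, qdz_eq, qdz_eq, qpd_add _ hf hg, qpd_add _ hf hg, mul_add]
  module

lemma qdzbar_add {f g : ℝ × ℝ → HC} {p : ℝ × ℝ} (hf : QDiffAt f p) (hg : QDiffAt g p) :
    qdzbar (fun s => f s + g s) p = qdzbar f p + qdzbar g p := by
  rw [qdzbar_eq, qdzbar_eq, qdzbar_eq, qpd_add _ hf hg, qpd_add _ hf hg, mul_add]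
  module

lemma qdz_mul_ci {f g : ℝ × ℝ → HC} {p : ℝ × ℝ} (hf : QDiffAt f p) (hg : QDiffAt g p)
    (hci : IsCI (f p)) :
    qdz (fun s => f s * g s) p = qdz f p * g p + f p * qdz g p := by
  rw [qdz_eq, qdz_eq, qdz_eq, qpd_mul _ hf hg, qpd_mul _ hf hg]
  rw [mul_add Iq, Iq_comm hci, csmul_mul, mul_csmul, sub_mul, mul_sub, mul_assoc]
  module

lemma qdzbar_mul_ci {f g : ℝ × ℝ → HC} {p : ℝ × ℝ} (hf : QDiffAt f p) (hg : QDiffAt g p)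
    (hci : IsCI (f p)) :
    qdzbar (fun s => f s * g s) p = qdzbar f p * g p + f p * qdzbar g p := by
  rw [qdzbar_eq, qdzbar_eq, qdzbar_eq, qpd_mul _ hf hg, qpd_mul _ hf hg]
  rw [mul_add Iq, Iq_comm hci, csmul_mul, mul_csmul, add_mul, mul_add, mul_assoc]
  module

lemma qdz_Jmul {g : ℝ × ℝ → HC} {p : ℝ × ℝ} (hg : QDiffAt g p) :
    qdz (fun s => Jq * g s) p = Jq * qdzbar g p := by
  rw [qdz_eq, qdzbar_eq, qpd_const_mul _ _ hg, qpd_const_mul _ _ hg, IJ_anti,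
    mul_csmul, mul_add]
  module

lemma qdzbar_Jmul {g : ℝ × ℝ → HC} {p : ℝ × ℝ} (hg : QDiffAt g p) :
    qdzbar (fun s => Jq * g s) p = Jq * qdz g p := by
  rw [qdzbar_eq, qdz_eq, qpd_const_mul _ _ hg, qpd_const_mul _ _ hg, IJ_anti,
    mul_csmul, mul_sub]
  module

/-! scalar-valued (`ℂ_I ∩ (ℝ·1⊕ℝ·i)`… really `K w = (w : HC)`) functions -/

def K (w : ℝ × ℝ → ℂ) : ℝ × ℝ → HC := fun s => (w s : HC)

lemma qpd_K (d : ℝ × ℝ) (w : ℝ × ℝ → ℂ) (p : ℝ × ℝ) :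
    qpd d (K w) p = ((pd d w p : ℂ) : HC) := by
  ext
  · rfl
  · show pd d (fun _ => (0:ℂ)) p = _; rw [pd_const]; rfl
  · show pd d (fun _ => (0:ℂ)) p = _; rw [pd_const]; rfl
  · show pd d (fun _ => (0:ℂ)) p = _; rw [pd_const]; rfl

lemma qdz_K (w : ℝ × ℝ → ℂ) (p : ℝ × ℝ) :
    qdz (K w) p = (2 : ℂ)⁻¹ • (((pd (1,0) w p : ℂ) : HC) - Iq * ((pd (0,1) w p : ℂ) : HC)) := by
  rw [qdz_eq, qpd_K, qpd_K]

lemma qdzbar_K (w : ℝ × ℝ → ℂ) (p : ℝ × ℝ) :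
    qdzbar (K w) p
      = (2 : ℂ)⁻¹ • (((pd (1,0) w p : ℂ) : HC) + Iq * ((pd (0,1) w p : ℂ) : HC)) := by
  rw [qdzbar_eq, qpd_K, qpd_K]

lemma isci_coe (c : ℂ) : IsCI ((c : HC)) := ⟨rfl, rfl⟩

lemma isci_K (w : ℝ × ℝ → ℂ) (s : ℝ × ℝ) : IsCI (K w s) := isci_coe _

lemma isci_qdz_K (w : ℝ × ℝ → ℂ) (p : ℝ × ℝ) : IsCI (qdz (K w) p) := by
  rw [qdz_K]
  constructor <;>
    simp [Iq_re, Iq_imI, Iq_imJ, Iq_imK, Quaternion.imJ_mul, Quaternion.imK_mul]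

lemma isci_qdzbar_K (w : ℝ × ℝ → ℂ) (p : ℝ × ℝ) : IsCI (qdzbar (K w) p) := by
  rw [qdzbar_K]
  constructor <;>
    simp [Iq_re, Iq_imI, Iq_imJ, Iq_imK, Quaternion.imJ_mul, Quaternion.imK_mul]

lemma isci_qdz {f : ℝ × ℝ → HC} (hf : ∀ s, IsCI (f s)) (p : ℝ × ℝ) : IsCI (qdz f p) := by
  have h1 : (fun s => (f s).imJ) = fun _ => (0:ℂ) := funext fun s => (hf s).1
  have h2 : (fun s => (f s).imK) = fun _ => (0:ℂ) := funext fun s => (hf s).2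
  rw [qdz_eq]
  constructor <;>
    simp [Iq_re, Iq_imI, Iq_imJ, Iq_imK, Quaternion.imJ_mul, Quaternion.imK_mul, h1, h2, pd_const]

lemma isci_qdzbar {f : ℝ × ℝ → HC} (hf : ∀ s, IsCI (f s)) (p : ℝ × ℝ) :
    IsCI (qdzbar f p) := by
  have h1 : (fun s => (f s).imJ) = fun _ => (0:ℂ) := funext fun s => (hf s).1
  have h2 : (fun s => (f s).imK) = fun _ => (0:ℂ) := funext fun s => (hf s).2
  rw [qdzbar_eq]
  constructor <;>
    simp [Iq_re, Iq_imI, Iq_imJ, Iq_imK, Quaternion.imJ_mul, Quaternion.imK_mul, h1, h2, pd_const]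

lemma conjI_qdz_K (w : ℝ × ℝ → ℂ) (p : ℝ × ℝ) : conjI (qdz (K w) p) = qdzbar (K w) p := by
  rw [qdz_K, qdzbar_K]
  ext <;> simp [conjI_re, conjI_imI, conjI_imJ, conjI_imK, Iq_re, Iq_imI, Iq_imJ, Iq_imK, Quaternion.re_mul, Quaternion.imI_mul, Quaternion.imJ_mul,
    Quaternion.imK_mul] <;> ring

lemma qdz_K_scale {w w' : ℝ × ℝ → ℂ} {c : ℂ} {p : ℝ × ℝ}
    (h1 : pd (1,0) w p = c * pd (1,0) w' p) (h2 : pd (0,1) w p = c * pd (0,1) w' p) :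
    qdz (K w) p = (c : HC) * qdz (K w') p := by
  rw [qdz_K, qdz_K, h1, h2]
  ext <;> simp [Iq_re, Iq_imI, Iq_imJ, Iq_imK, Quaternion.re_mul, Quaternion.imI_mul, Quaternion.imJ_mul,
    Quaternion.imK_mul] <;> ring

lemma qdzbar_K_scale {w w' : ℝ × ℝ → ℂ} {c : ℂ} {p : ℝ × ℝ}
    (h1 : pd (1,0) w p = c * pd (1,0) w' p) (h2 : pd (0,1) w p = c * pd (0,1) w' p) :
    qdzbar (K w) p = (c : HC) * qdzbar (K w') p := by
  rw [qdzbar_K, qdzbar_K, h1, h2]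
  ext <;> simp [Iq_re, Iq_imI, Iq_imJ, Iq_imK, Quaternion.re_mul, Quaternion.imI_mul, Quaternion.imJ_mul,
    Quaternion.imK_mul] <;> ring

lemma qsm_K {w : ℝ × ℝ → ℂ} (hw : ContDiff ℝ (⊤ : ℕ∞) w) : QSmooth (K w) :=
  ⟨hw, contDiff_const, contDiff_const, contDiff_const⟩

lemma qsm_mul {f g : ℝ × ℝ → HC} (hf : QSmooth f) (hg : QSmooth g) :
    QSmooth (fun s => f s * g s) := by
  obtain ⟨hf1, hf2, hf3, hf4⟩ := hf; obtain ⟨hg1, hg2, hg3, hg4⟩ := hg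
  refine ⟨?_, ?_, ?_, ?_⟩
  · simp only [Quaternion.re_mul]; fun_prop
  · simp only [Quaternion.imI_mul]; fun_prop
  · simp only [Quaternion.imJ_mul]; fun_prop
  · simp only [Quaternion.imK_mul]; fun_prop

lemma qsm_const (c : HC) : QSmooth (fun _ => c) :=
  ⟨contDiff_const, contDiff_const, contDiff_const, contDiff_const⟩

lemma pd_mul_const {f : ℝ × ℝ → ℂ} {p : ℝ × ℝ} (d : ℝ × ℝ) (c : ℂ)
    (hf : DifferentiableAt ℝ f p) :
    pd d (fun s => f s * c) p = pd d f p * c := by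
  rw [pd_mul d hf (differentiableAt_const c), pd_const]; ring

end S13

namespace S13

def ucF (τ₀ : ℝ × ℝ → ℝ) : ℝ × ℝ → ℂ := fun s => ((Real.log (Real.sqrt (τ₀ s)) : ℝ) : ℂ)
def scF (τ₀ : ℝ × ℝ → ℝ) : ℝ × ℝ → ℂ := fun s => ((Real.sqrt (τ₀ s) : ℝ) : ℂ)
def rcF (τ₀ : ℝ × ℝ → ℝ) : ℝ × ℝ → ℂ := fun s => (((Real.sqrt (τ₀ s))⁻¹ : ℝ) : ℂ)
def brcF (τ₀ : ℝ × ℝ → ℝ) : ℝ × ℝ → ℂ := fun s => rcF τ₀ s * Complex.I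
def ccF (τ₀ : ℝ × ℝ → ℝ) : ℝ × ℝ → ℂ := fun s => scF τ₀ s * (Complex.I / 4)
def uQ (τ₀ : ℝ × ℝ → ℝ) : ℝ × ℝ → HC := K (ucF τ₀)
def qQ (Q₀ : ℝ × ℝ → ℂ) : ℝ × ℝ → HC := fun s => cI (Q₀ s)
def BQ (τ₀ : ℝ × ℝ → ℝ) (Q₀ : ℝ × ℝ → ℂ) : ℝ × ℝ → HC :=
  fun s => K (brcF τ₀) s * qQ Q₀ s
def CQ (τ₀ : ℝ × ℝ → ℝ) : ℝ × ℝ → HC := K (ccF τ₀)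

lemma rsmul_eq (r : ℝ) (x : HC) : r • x = ((r : ℂ) : HC) * x := by
  ext <;> simp [Quaternion.re_mul, Quaternion.imI_mul, Quaternion.imJ_mul,
    Quaternion.imK_mul, Complex.real_smul]

lemma csmul_eq (c : ℂ) (x : HC) : c • x = (c : HC) * x :=
  (Quaternion.coe_mul_eq_smul c x).symm

lemma IsCI.subCI {x y : HC} (hx : IsCI x) (hy : IsCI y) : IsCI (x - y) := by
  exact ⟨by simp [Quaternion.imJ_sub, hx.1, hy.1], by simp [Quaternion.imK_sub, hx.2, hy.2]⟩

lemma IsCI.addCI {x y : HC} (hx : IsCI x) (hy : IsCI y) : IsCI (x + y) := by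
  exact ⟨by simp [Quaternion.imJ_add, hx.1, hy.1], by simp [Quaternion.imK_add, hx.2, hy.2]⟩

lemma qdiff_qdz {f : ℝ × ℝ → HC} (hf : QSmooth f) (p : ℝ × ℝ) : QDiffAt (qdz f) p := by
  have e : qdz f = fun s => (2:ℂ)⁻¹ • (qpd (1,0) f s - Iq * qpd (0,1) f s) := rfl
  rw [e]
  exact QDiffAt.smulF _ (QDiffAt.sub (qsm_diffAt (qsm_qpd hf _) p)
    (QDiffAt.mulF (QDiffAt.constF Iq p) (qsm_diffAt (qsm_qpd hf _) p)))

lemma qdiff_qdzbar {f : ℝ × ℝ → HC} (hf : QSmooth f) (p : ℝ × ℝ) : QDiffAt (qdzbar f) p := by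
  have e : qdzbar f = fun s => (2:ℂ)⁻¹ • (qpd (1,0) f s + Iq * qpd (0,1) f s) := rfl
  rw [e]
  exact QDiffAt.smulF _ (QDiffAt.add (qsm_diffAt (qsm_qpd hf _) p)
    (QDiffAt.mulF (QDiffAt.constF Iq p) (qsm_diffAt (qsm_qpd hf _) p)))

end S13

namespace S13

lemma qmul_neg (x y : HC) : x * -y = -(x * y) := mul_neg x y
lemma qneg_mul (x y : HC) : -x * y = -(x * y) := neg_mul x y

lemma conjI_ci {x : HC} (hx : IsCI x) : IsCI (conjI x) := ⟨hx.1, hx.2⟩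

lemma split_XY {X Y : HC} (hX : IsCI X) (hY : IsCI Y) (h : X + Y * Jq = 0) :
    X = 0 ∧ Y = 0 := by
  have h1 := congrArg (fun z : HC => z.re) h
  have h2 := congrArg (fun z : HC => z.imI) h
  have h3 := congrArg (fun z : HC => z.imJ) h
  have h4 := congrArg (fun z : HC => z.imK) h
  simp only [Jq_re, Jq_imI, Jq_imJ, Jq_imK, Quaternion.re_add, Quaternion.imI_add, Quaternion.imJ_add,
    Quaternion.imK_add, Quaternion.re_mul, Quaternion.imI_mul, Quaternion.imJ_mul,
    Quaternion.imK_mul] at h1 h2 h3 h4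
  simp [hX.1, hX.2, hY.1, hY.2, Quaternion.re_zero, Quaternion.imI_zero, Quaternion.imJ_zero, Quaternion.imK_zero] at h1 h2 h3 h4
  constructor <;> ext <;> simp [hX.1, hX.2, hY.1, hY.2, h1, h2, h3, h4, Quaternion.re_zero, Quaternion.imI_zero, Quaternion.imJ_zero, Quaternion.imK_zero]

set_option maxHeartbeats 3200000 in
theorem key (τ₀ : ℝ × ℝ → ℝ) (Q₀ : ℝ × ℝ → ℂ)
    (hτ : ContDiff ℝ (⊤ : ℕ∞) τ₀) (hτpos : ∀ p, 0 < τ₀ p)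
    (hQ : ContDiff ℝ (⊤ : ℕ∞) Q₀)
    (v : ℝ × ℝ → Quaternion ℂ) (hvs : QSmooth v)
    (hvnz : ∀ p, Hvv (v p) ≠ 0) (hsys : VSystem τ₀ Q₀ v) (p : ℝ × ℝ) :
    qdzbar (qQ Q₀) p = 0 ∧
      qdz (qdzbar (uQ τ₀)) p = rQ (-(Complex.normSq (Q₀ p)) / τ₀ p + τ₀ p / 16) := by
  have hsqp : ∀ s, 0 < Real.sqrt (τ₀ s) := fun s => Real.sqrt_pos.2 (hτpos s)
  -- real smoothness
  have hs0 : ContDiff ℝ (⊤:ℕ∞) (fun s => Real.sqrt (τ₀ s)) := by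
    rw [contDiff_iff_contDiffAt]
    intro x
    exact (Real.contDiffAt_sqrt (ne_of_gt (hτpos x))).comp x hτ.contDiffAt
  have hu0 : ContDiff ℝ (⊤:ℕ∞) (fun s => Real.log (Real.sqrt (τ₀ s))) := by
    rw [contDiff_iff_contDiffAt]
    intro x
    exact (hs0.contDiffAt).log (ne_of_gt (hsqp x))
  have hr0 : ContDiff ℝ (⊤:ℕ∞) (fun s => (Real.sqrt (τ₀ s))⁻¹) := by
    rw [contDiff_iff_contDiffAt]
    intro x
    exact (hs0.contDiffAt).inv (ne_of_gt (hsqp x))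
  -- complex smoothness
  have hsc : ContDiff ℝ (⊤:ℕ∞) (scF τ₀) := Complex.ofRealCLM.contDiff.comp hs0
  have huc : ContDiff ℝ (⊤:ℕ∞) (ucF τ₀) := Complex.ofRealCLM.contDiff.comp hu0
  have hrc : ContDiff ℝ (⊤:ℕ∞) (rcF τ₀) := Complex.ofRealCLM.contDiff.comp hr0
  have hbrc : ContDiff ℝ (⊤:ℕ∞) (brcF τ₀) := hrc.mul contDiff_const
  have hcc : ContDiff ℝ (⊤:ℕ∞) (ccF τ₀) := hsc.mul contDiff_const
  have hsmq : QSmooth (qQ Q₀) :=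
    ⟨Complex.ofRealCLM.contDiff.comp (Complex.reCLM.contDiff.comp hQ),
     Complex.ofRealCLM.contDiff.comp (Complex.imCLM.contDiff.comp hQ),
     contDiff_const, contDiff_const⟩
  have hsmu : QSmooth (uQ τ₀) := qsm_K huc
  have hsmB : QSmooth (BQ τ₀ Q₀) := qsm_mul (qsm_K hbrc) hsmq
  have hsmC : QSmooth (CQ τ₀) := qsm_K hcc
  -- IsCI facts
  have hciq : ∀ s, IsCI (qQ Q₀ s) := fun s => ⟨rfl, rfl⟩
  have hciA : ∀ x, IsCI (qdz (uQ τ₀) x) := fun x => isci_qdz_K _ x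
  have hciAb : ∀ x, IsCI (qdzbar (uQ τ₀) x) := fun x => isci_qdzbar_K _ x
  have hciB : ∀ s, IsCI (BQ τ₀ Q₀ s) := fun s => IsCI.mulCI (isci_coe _) (hciq s)
  have hciC : ∀ s, IsCI (CQ τ₀ s) := fun s => isci_coe _
  have hciBb : IsCI (qdzbar (BQ τ₀ Q₀) p) := isci_qdzbar hciB p
  have hciCz : IsCI (qdz (CQ τ₀) p) := isci_qdz_K _ p
  have hciA2 : IsCI (qdzbar (qdz (uQ τ₀)) p) := isci_qdzbar hciA p
  -- differentiability at p
  have hdv : QDiffAt v p := qsm_diffAt hvs p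
  have hdJv : QDiffAt (fun s => Jq * v s) p := QDiffAt.mulF (QDiffAt.constF Jq p) hdv
  have hdA : QDiffAt (qdz (uQ τ₀)) p := qdiff_qdz hsmu p
  have hdq : QDiffAt (qQ Q₀) p := qsm_diffAt hsmq p
  have hdB : QDiffAt (BQ τ₀ Q₀) p := qsm_diffAt hsmB p
  have hdC : QDiffAt (CQ τ₀) p := qsm_diffAt hsmC p
  have hdK : QDiffAt (K (brcF τ₀)) p := qsm_diffAt (qsm_K hbrc) p
  -- rewrite the system into multiplicative form
  have hufn : (fun s => rQ (Real.log (Real.sqrt (τ₀ s)))) = uQ τ₀ := rfl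
  have hv1 : ∀ s, qdz v s = qdz (uQ τ₀) s * v s + BQ τ₀ Q₀ s * (Jq * v s) := by
    intro s
    rw [(hsys s).1, hufn]
    congr 1
    rw [rsmul_eq, csmul_eq]
    show ((((Real.sqrt (τ₀ s))⁻¹ : ℝ) : ℂ) : HC) * ((Complex.I : HC) * (cI (Q₀ s) * (Jq * v s)))
        = ((brcF τ₀ s : ℂ) : HC) * cI (Q₀ s) * (Jq * v s)
    rw [show ((brcF τ₀ s : ℂ) : HC)
        = ((((Real.sqrt (τ₀ s))⁻¹ : ℝ) : ℂ) : HC) * ((Complex.I : ℂ) : HC) from by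
      rw [← Quaternion.coe_mul]; rfl]
    simp [mul_assoc]
  have hv2 : ∀ s, qdzbar v s = CQ τ₀ s * (Jq * v s) := by
    intro s
    rw [(hsys s).2, rsmul_eq, csmul_eq, ← mul_assoc, ← Quaternion.coe_mul]
    show ((((Real.sqrt (τ₀ s) / 4 : ℝ) : ℂ) * Complex.I : ℂ) : HC) * (Jq * v s)
        = ((ccF τ₀ s : ℂ) : HC) * (Jq * v s)
    congr 2
    show ((Real.sqrt (τ₀ s) / 4 : ℝ) : ℂ) * Complex.I
        = ((Real.sqrt (τ₀ s) : ℝ) : ℂ) * (Complex.I / 4)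
    push_cast
    ring
  -- scalar differentiability at p
  have hds0 : DifferentiableAt ℝ (fun s => Real.sqrt (τ₀ s)) p :=
    (hs0.differentiable (by simp)).differentiableAt
  have hdu0 : DifferentiableAt ℝ (fun s => Real.log (Real.sqrt (τ₀ s))) p :=
    (hu0.differentiable (by simp)).differentiableAt
  have hdsc : DifferentiableAt ℝ (scF τ₀) p :=
    (hsc.differentiable (by simp)).differentiableAt
  have hdrc : DifferentiableAt ℝ (rcF τ₀) p :=
    (hrc.differentiable (by simp)).differentiableAt
  -- scalar chain rules at p
  have hchain : ∀ d, pd d (scF τ₀) p = scF τ₀ p * pd d (ucF τ₀) p := by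
    intro d
    show pd d (fun s => ((Real.sqrt (τ₀ s) : ℝ) : ℂ)) p
        = ((Real.sqrt (τ₀ p) : ℝ) : ℂ)
          * pd d (fun s => ((Real.log (Real.sqrt (τ₀ s)) : ℝ) : ℂ)) p
    rw [pd_ofReal d hds0, pd_ofReal d hdu0]
    have hlog : fderiv ℝ (fun s => Real.log (Real.sqrt (τ₀ s))) p
        = (Real.sqrt (τ₀ p))⁻¹ • fderiv ℝ (fun s => Real.sqrt (τ₀ s)) p :=
      (hds0.hasFDerivAt.log (ne_of_gt (hsqp p))).fderiv
    rw [hlog]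
    have hne : ((Real.sqrt (τ₀ p) : ℝ) : ℂ) ≠ 0 :=
      Complex.ofReal_ne_zero.2 (ne_of_gt (hsqp p))
    simp only [ContinuousLinearMap.smul_apply, smul_eq_mul]
    push_cast
    field_simp
  have hrs1 : ∀ s, rcF τ₀ s * scF τ₀ s = 1 := by
    intro s
    show (((Real.sqrt (τ₀ s))⁻¹ : ℝ) : ℂ) * ((Real.sqrt (τ₀ s) : ℝ) : ℂ) = 1
    rw [← Complex.ofReal_mul, inv_mul_cancel₀ (ne_of_gt (hsqp s))]
    norm_num
  have hinv : ∀ d, pd d (rcF τ₀) p = -(rcF τ₀ p) * pd d (ucF τ₀) p := by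
    intro d
    have h0 : pd d (fun s => rcF τ₀ s * scF τ₀ s) p = 0 := by
      rw [show (fun s => rcF τ₀ s * scF τ₀ s) = fun _ => (1:ℂ) from funext hrs1, pd_const]
    rw [pd_mul d hdrc hdsc, hchain d] at h0
    linear_combination rcF τ₀ p * h0
      - (pd d (rcF τ₀) p + rcF τ₀ p * pd d (ucF τ₀) p) * (hrs1 p)
  have hbrcd : ∀ d, pd d (brcF τ₀) p = -(brcF τ₀ p) * pd d (ucF τ₀) p := by
    intro d
    show pd d (fun s => rcF τ₀ s * Complex.I) p = -(rcF τ₀ p * Complex.I) * pd d (ucF τ₀) p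
    rw [pd_mul_const d _ hdrc, hinv d]
    ring
  have hccd : ∀ d, pd d (ccF τ₀) p = (ccF τ₀ p) * pd d (ucF τ₀) p := by
    intro d
    show pd d (fun s => scF τ₀ s * (Complex.I / 4)) p
        = (scF τ₀ p * (Complex.I / 4)) * pd d (ucF τ₀) p
    rw [pd_mul_const d _ hdsc, hchain d]
    ring
  have hCz : qdz (CQ τ₀) p = CQ τ₀ p * qdz (uQ τ₀) p := qdz_K_scale (hccd _) (hccd _)
  have hrbar : qdzbar (K (brcF τ₀)) p
      = ((-(brcF τ₀ p) : ℂ) : HC) * qdzbar (uQ τ₀) p := qdzbar_K_scale (hbrcd _) (hbrcd _)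
  have habar : conjI (qdz (uQ τ₀) p) = qdzbar (uQ τ₀) p := conjI_qdz_K _ p
  -- the compatibility equation
  have hv1f : qdz v = fun s => qdz (uQ τ₀) s * v s + BQ τ₀ Q₀ s * (Jq * v s) := funext hv1
  have hv2f : qdzbar v = fun s => CQ τ₀ s * (Jq * v s) := funext hv2
  have h4 : qdzbar (qdz v) p
      = qdzbar (qdz (uQ τ₀)) p * v p + qdz (uQ τ₀) p * (CQ τ₀ p * (Jq * v p))
        + (qdzbar (BQ τ₀ Q₀) p * (Jq * v p)
          + BQ τ₀ Q₀ p * (Jq * (qdz (uQ τ₀) p * v p + BQ τ₀ Q₀ p * (Jq * v p)))) := by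
    rw [hv1f, qdzbar_add (QDiffAt.mulF hdA hdv) (QDiffAt.mulF hdB hdJv),
        qdzbar_mul_ci hdA hdv (hciA p), qdzbar_mul_ci hdB hdJv (hciB p),
        qdzbar_Jmul hdv, hv2 p, hv1 p]
  have h5 : qdz (qdzbar v) p
      = qdz (CQ τ₀) p * (Jq * v p) + CQ τ₀ p * (Jq * (CQ τ₀ p * (Jq * v p))) := by
    rw [hv2f, qdz_mul_ci hdC hdJv (hciC p), qdz_Jmul hdv, hv2 p]
  have heq : qdzbar (qdz (uQ τ₀)) p * v p + qdz (uQ τ₀) p * (CQ τ₀ p * (Jq * v p))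
        + (qdzbar (BQ τ₀ Q₀) p * (Jq * v p)
          + BQ τ₀ Q₀ p * (Jq * (qdz (uQ τ₀) p * v p + BQ τ₀ Q₀ p * (Jq * v p))))
      = qdz (CQ τ₀) p * (Jq * v p) + CQ τ₀ p * (Jq * (CQ τ₀ p * (Jq * v p))) := by
    rw [← h4, ← h5]
    exact qdzbar_qdz_comm hvs p
  have e1 : Jq * (qdz (uQ τ₀) p * v p + BQ τ₀ Q₀ p * (Jq * v p))
      = conjI (qdz (uQ τ₀) p) * (Jq * v p) - conjI (BQ τ₀ Q₀ p) * v p := by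
    rw [mul_add, J_ci (hciA p), J_ci (hciB p), JJ, sub_eq_add_neg]
    exact congrArg (fun t => conjI (qdz (uQ τ₀) p) * (Jq * v p) + t) (qmul_neg _ _)
  have e2 : Jq * (CQ τ₀ p * (Jq * v p)) = -(conjI (CQ τ₀ p) * v p) := by
    rw [J_ci (hciC p), JJ]
    exact qmul_neg _ _
  rw [e1, e2] at heq
  have hw : ((qdzbar (qdz (uQ τ₀)) p - BQ τ₀ Q₀ p * conjI (BQ τ₀ Q₀ p)
        + CQ τ₀ p * conjI (CQ τ₀ p))
      + (qdz (uQ τ₀) p * CQ τ₀ p + qdzbar (BQ τ₀ Q₀) p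
        + BQ τ₀ Q₀ p * conjI (qdz (uQ τ₀) p) - qdz (CQ τ₀) p) * Jq) * v p = 0 := by
    have h6 : ((qdzbar (qdz (uQ τ₀)) p - BQ τ₀ Q₀ p * conjI (BQ τ₀ Q₀ p)
          + CQ τ₀ p * conjI (CQ τ₀ p))
        + (qdz (uQ τ₀) p * CQ τ₀ p + qdzbar (BQ τ₀ Q₀) p
          + BQ τ₀ Q₀ p * conjI (qdz (uQ τ₀) p) - qdz (CQ τ₀) p) * Jq) * v p
        = (qdzbar (qdz (uQ τ₀)) p * v p + qdz (uQ τ₀) p * (CQ τ₀ p * (Jq * v p))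
            + (qdzbar (BQ τ₀ Q₀) p * (Jq * v p)
              + BQ τ₀ Q₀ p * (conjI (qdz (uQ τ₀) p) * (Jq * v p)
                - conjI (BQ τ₀ Q₀ p) * v p)))
          - (qdz (CQ τ₀) p * (Jq * v p) + CQ τ₀ p * -(conjI (CQ τ₀ p) * v p)) := by
      simp only [add_mul, sub_mul, mul_add, mul_sub, qmul_neg, qneg_mul, mul_assoc]
      abel
    rw [h6, heq, sub_self]
  obtain ⟨hX0, hY0⟩ := split_XY
    (IsCI.addCI (IsCI.subCI hciA2 (IsCI.mulCI (hciB p) (conjI_ci (hciB p))))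
      (IsCI.mulCI (hciC p) (conjI_ci (hciC p))))
    (IsCI.subCI (IsCI.addCI (IsCI.addCI (IsCI.mulCI (hciA p) (hciC p)) hciBb)
      (IsCI.mulCI (hciB p) (conjI_ci (hciA p)))) hciCz)
    (eq_zero_of_mul_right hw (hvnz p))
  -- conclusion 1
  have hBb : qdzbar (BQ τ₀ Q₀) p
      = qdzbar (K (brcF τ₀)) p * qQ Q₀ p + K (brcF τ₀) p * qdzbar (qQ Q₀) p := by
    show qdzbar (fun s => K (brcF τ₀) s * qQ Q₀ s) p = _
    exact qdzbar_mul_ci hdK hdq (isci_K _ p)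
  rw [hBb, hrbar, hCz, habar, IsCI.comm (hciA p) (hciC p)] at hY0
  have hcancel : ((-(brcF τ₀ p) : ℂ) : HC) * qdzbar (uQ τ₀) p * qQ Q₀ p
      + (BQ τ₀ Q₀ p) * qdzbar (uQ τ₀) p = 0 := by
    have h1 : qQ Q₀ p * qdzbar (uQ τ₀) p = qdzbar (uQ τ₀) p * qQ Q₀ p :=
      IsCI.comm (hciq p) (hciAb p)
    show ((-(brcF τ₀ p) : ℂ) : HC) * qdzbar (uQ τ₀) p * qQ Q₀ p
        + (((brcF τ₀ p : ℂ) : HC) * qQ Q₀ p) * qdzbar (uQ τ₀) p = 0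
    rw [mul_assoc, mul_assoc, h1, Quaternion.coe_neg, neg_mul, neg_add_cancel]
  have hfin : K (brcF τ₀) p * qdzbar (qQ Q₀) p = 0 := by
    calc K (brcF τ₀) p * qdzbar (qQ Q₀) p
        = (CQ τ₀ p * qdz (uQ τ₀) p
            + (((-(brcF τ₀ p) : ℂ) : HC) * qdzbar (uQ τ₀) p * qQ Q₀ p
              + K (brcF τ₀) p * qdzbar (qQ Q₀) p)
            + BQ τ₀ Q₀ p * qdzbar (uQ τ₀) p - CQ τ₀ p * qdz (uQ τ₀) p)
          - (((-(brcF τ₀ p) : ℂ) : HC) * qdzbar (uQ τ₀) p * qQ Q₀ p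
              + BQ τ₀ Q₀ p * qdzbar (uQ τ₀) p) := by abel
      _ = 0 - 0 := by rw [hY0, hcancel]
      _ = 0 := by simp
  have hD : qdzbar (qQ Q₀) p = 0 := by
    have hne : brcF τ₀ p ≠ 0 :=
      mul_ne_zero (Complex.ofReal_ne_zero.2 (inv_ne_zero (ne_of_gt (hsqp p)))) Complex.I_ne_zero
    have h8 : brcF τ₀ p • qdzbar (qQ Q₀) p = 0 := by
      rw [csmul_eq]; exact hfin
    rw [← one_smul ℂ (qdzbar (qQ Q₀) p), ← inv_mul_cancel₀ hne, mul_smul, h8, smul_zero]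
  refine ⟨hD, ?_⟩
  -- conclusion 2
  have hA2 : qdzbar (qdz (uQ τ₀)) p
      = BQ τ₀ Q₀ p * conjI (BQ τ₀ Q₀ p) - CQ τ₀ p * conjI (CQ τ₀ p) := by
    rw [← sub_eq_zero]
    calc qdzbar (qdz (uQ τ₀)) p
          - (BQ τ₀ Q₀ p * conjI (BQ τ₀ Q₀ p) - CQ τ₀ p * conjI (CQ τ₀ p))
        = qdzbar (qdz (uQ τ₀)) p - BQ τ₀ Q₀ p * conjI (BQ τ₀ Q₀ p)
            + CQ τ₀ p * conjI (CQ τ₀ p) := by abel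
      _ = 0 := hX0
  have hval : BQ τ₀ Q₀ p * conjI (BQ τ₀ Q₀ p) - CQ τ₀ p * conjI (CQ τ₀ p)
      = rQ (-(Complex.normSq (Q₀ p)) / τ₀ p + τ₀ p / 16) := by
    have hss : ((Real.sqrt (τ₀ p) : ℝ) : ℂ) * ((Real.sqrt (τ₀ p) : ℝ) : ℂ) = ((τ₀ p : ℝ) : ℂ) := by
      rw [← Complex.ofReal_mul, Real.mul_self_sqrt (le_of_lt (hτpos p))]
    have hI : Complex.I * Complex.I = -1 := Complex.I_mul_I
    have h2 : ((Real.sqrt (τ₀ p):ℝ):ℂ)⁻¹ * ((Real.sqrt (τ₀ p):ℝ):ℂ)⁻¹ = ((τ₀ p:ℝ):ℂ)⁻¹ := by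
      rw [← mul_inv, hss]
    ext <;>
      simp [BQ, CQ, K, qQ, conjI_re, conjI_imI, conjI_imJ, conjI_imK, cI_re, cI_imI, cI_imJ, cI_imK,
          brcF, ccF, rcF, scF, rQ_re, rQ_imI, rQ_imJ, rQ_imK, Quaternion.re_mul,
        Quaternion.imI_mul, Quaternion.imJ_mul, Quaternion.imK_mul, Complex.normSq_apply]
    · linear_combination (((Real.sqrt (τ₀ p):ℝ):ℂ)⁻¹ * ((Real.sqrt (τ₀ p):ℝ):ℂ)⁻¹
          * ((((Q₀ p).re:ℝ):ℂ) * (((Q₀ p).re:ℝ):ℂ) + (((Q₀ p).im:ℝ):ℂ) * (((Q₀ p).im:ℝ):ℂ))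
        - ((Real.sqrt (τ₀ p):ℝ):ℂ) * ((Real.sqrt (τ₀ p):ℝ):ℂ) / 16) * hI
      - ((((Q₀ p).re:ℝ):ℂ) * (((Q₀ p).re:ℝ):ℂ) + (((Q₀ p).im:ℝ):ℂ) * (((Q₀ p).im:ℝ):ℂ)) * h2
      + (1/16 : ℂ) * hss
    · ring
  rw [← qdzbar_qdz_comm hsmu p, hA2, hval]

end S13

-- MORE

/-- If `v : ℝ² → W` is smooth with `H(v,v)` nowhere vanishing and satisfies
the `v`-system for smooth data `τ₀ : ℝ² → (0,∞)`, `Q₀ : ℝ² → ℂ_I`, then `∂_z̄ Q₀ = 0`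
(`Q₀` is `I`-holomorphic) and `∂_z(∂_z̄(log √τ₀)) = −|Q₀|²/τ₀ + τ₀/16`: these are the
compatibility conditions of the spinor equation of `H = 1/2` surfaces in `ℝ^{1,2}`. -/
theorem stmt13 (τ₀ : ℝ × ℝ → ℝ) (Q₀ : ℝ × ℝ → ℂ)
    (hτ : ContDiff ℝ (⊤ : ℕ∞) τ₀) (hτpos : ∀ p, 0 < τ₀ p)
    (hQ : ContDiff ℝ (⊤ : ℕ∞) Q₀)
    (v : ℝ × ℝ → Quaternion ℂ) (hvs : QSmooth v) (hvW : ∀ p, v p ∈ Wset)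
    (hvnz : ∀ p, Hvv (v p) ≠ 0) (hsys : VSystem τ₀ Q₀ v) :
    (∀ p, qdzbar (fun s => cI (Q₀ s)) p = 0) ∧
    (∀ p, qdz (fun s => qdzbar (fun r => rQ (Real.log (Real.sqrt (τ₀ r)))) s) p
        = rQ (-(Complex.normSq (Q₀ p)) / τ₀ p + τ₀ p / 16)) := by
  constructor
  · intro p
    exact (S13.key τ₀ Q₀ hτ hτpos hQ v hvs hvnz hsys p).1
  · intro p
    exact (S13.key τ₀ Q₀ hτ hτpos hQ v hvs hvnz hsys p).2
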